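/- Let G be a single-decision causal influence diagram and X a variable of G other than the decision D. If G contains a directed path of the form D ⇝ X ⇝ U for some utility node U, then there exists a SCIM compatible with G that has a control incentive on X. -/

import Mathlib

attribute [local instance] Classical.propDecidable

noncomputable section

/-! ### d-separation in a directed graph -/

/-- `b` is a collider on a path segment `a - b - c`. -/
def IsCollider {V : Type} (E : V → V → Prop) (a b c : V) : Prop := E a b ∧ E c b

/-- The triple `a - b - c` on an undirected path blocks the path w.r.t. `Z`:
either the middle node is a non-collider (chain or fork) belonging to `Z`, or it is a
collider such that neither it nor any of its descendants belongs to `Z`. -/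
def BlockedTriple {V : Type} (E : V → V → Prop) (Z : Set V) (a b c : V) : Prop :=
  (¬ IsCollider E a b c ∧ b ∈ Z) ∨
    (IsCollider E a b c ∧ ∀ w, Relation.ReflTransGen E b w → w ∉ Z)

/-- An undirected path: a nonempty list of distinct vertices in which consecutive
vertices are joined by an edge in one direction or the other. -/
def IsUPath {V : Type} (E : V → V → Prop) (p : List V) : Prop :=
  p ≠ [] ∧ p.Nodup ∧ p.Chain' (fun a b => E a b ∨ E b a)

/-- A path is d-separated (blocked) by `Z` if some consecutive triple blocks it. -/
def BlockedPath {V : Type} (E : V → V → Prop) (Z : Set V) (p : List V) : Prop :=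
  ∃ l₁ a b c l₂, p = l₁ ++ a :: b :: c :: l₂ ∧ BlockedTriple E Z a b c

/-- `Z` d-separates the node sets `S` and `T`: every undirected path from a node of `S`
to a node of `T` is blocked by `Z`. -/
def DSep {V : Type} (E : V → V → Prop) (S T Z : Set V) : Prop :=
  ∀ p : List V, IsUPath E p → (∃ s ∈ S, p.head? = some s) →
    (∃ t ∈ T, p.getLast? = some t) → BlockedPath E Z p

/-! ### Causal influence diagrams and structural causal influence models -/

/-- A single-decision causal influence diagram: a finite DAG whose vertices are
partitioned into structure nodes, one decision node and utility nodes
(the utility nodes having no children). -/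
structure CID (V : Type) where
  edge : V → V → Prop
  acyclic : ∀ v, ¬ Relation.TransGen edge v v
  decision : V
  utility : Finset V
  decision_not_utility : decision ∉ utility
  utility_no_children : ∀ u ∈ utility, ∀ v, ¬ edge u v

/-- A (single-decision) structural causal influence model over a CID: finite nonempty
domains for every variable, one finite-domain exogenous variable per variable, structural
functions for every non-decision variable, real-valued (injectively embedded, i.e. the
domain is a subset of ℝ) utility variables, and mutually independent exogenous
distributions. -/
structure SCIM (V : Type) extends CID V where
  dom : V → Type
  dom_fintype : ∀ v, Fintype (dom v)
  dom_nonempty : ∀ v, Nonempty (dom v)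
  edom : V → Type
  edom_fintype : ∀ v, Fintype (edom v)
  edom_nonempty : ∀ v, Nonempty (edom v)
  utilVal : ∀ v, dom v → ℝ
  utilVal_inj : ∀ v ∈ utility, Function.Injective (utilVal v)
  f : ∀ v, v ≠ decision → (∀ w, edge w v → dom w) → edom v → dom v
  μ : ∀ v, edom v → ℝ
  μ_nonneg : ∀ v e, 0 ≤ μ v e
  μ_sum : ∀ v, ∑ e ∈ @Finset.univ (edom v) (edom_fintype v), μ v e = 1

variable {V : Type} [Fintype V] [DecidableEq V]

instance (M : SCIM V) (v : V) : Fintype (M.dom v) := M.dom_fintype v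
instance (M : SCIM V) (v : V) : Nonempty (M.dom v) := M.dom_nonempty v
instance (M : SCIM V) (v : V) : Fintype (M.edom v) := M.edom_fintype v
instance (M : SCIM V) (v : V) : Nonempty (M.edom v) := M.edom_nonempty v

namespace SCIM

variable (M : SCIM V)

/-- A joint setting of the exogenous variables. -/
abbrev Env := ∀ v, M.edom v

/-- Joint probability of an exogenous setting (the exogenous variables are independent). -/
def prob (ε : M.Env) : ℝ := ∏ v, M.μ v (ε v)

/-- The type of structural mechanisms for the vertex `v`. -/
def Mechanism (v : V) : Type := (∀ w, M.edge w v → M.dom w) → M.edom v → M.dom v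

/-- A policy: a structural function for the decision node. -/
abbrev Policy := M.Mechanism M.decision

theorem edge_wf : WellFounded M.edge := by
  haveI : IsTrans V (Relation.TransGen M.edge) := ⟨fun _ _ _ h h' => h.trans h'⟩
  haveI : IsIrrefl V (Relation.TransGen M.edge) := ⟨M.acyclic⟩
  exact Subrelation.wf (fun h => Relation.TransGen.single h)
    (Finite.wellFounded_of_trans_of_irrefl _)

/-- The unique solution of the structural equations `mech` given exogenous setting `ε`. -/
def solve (mech : ∀ v, M.Mechanism v) (ε : M.Env) : ∀ v, M.dom v :=
  WellFounded.fix (C := fun v => M.dom v) M.edge_wf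
    (fun v IH => mech v (fun w hw => IH w hw) (ε v))

/-- The mechanisms of the SCM `M_π` obtained by fixing the policy `π`. -/
def polMech (π : M.Policy) : ∀ v, M.Mechanism v :=
  fun v => if h : v = M.decision then cast (congrArg M.Mechanism h).symm π else M.f v h

/-- Apply an intervention (a partial assignment `ι` of values) to mechanisms:
intervened variables are set to constants. -/
def doMech (mech : ∀ v, M.Mechanism v) (ι : ∀ v, Option (M.dom v)) : ∀ v, M.Mechanism v :=
  fun v => match ι v with
    | some x => fun _ _ => x
    | none => mech v

/-- The single intervention `do(X = x)` as a partial assignment. -/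
def single (X : V) (x : M.dom X) : ∀ v, Option (M.dom v) :=
  fun v => if h : v = X then some (cast (congrArg M.dom h).symm x) else none

/-- The value `W(ε)` of each variable in `M_π`. -/
def val (π : M.Policy) (ε : M.Env) : ∀ v, M.dom v := M.solve (M.polMech π) ε

/-- The potential response: the value of each variable in the submodel of `M_π`
given by the intervention `ι`. -/
def valDo (π : M.Policy) (ι : ∀ v, Option (M.dom v)) (ε : M.Env) : ∀ v, M.dom v :=
  M.solve (M.doMech (M.polMech π) ι) ε

/-- Total utility of an assignment of values to the variables. -/
def totUtil (a : ∀ v, M.dom v) : ℝ := ∑ v ∈ M.utility, M.utilVal v (a v)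

/-- Expected total utility of the policy `π`. -/
def EU (π : M.Policy) : ℝ := ∑ ε : M.Env, M.prob ε * M.totUtil (M.val π ε)

/-- An optimal policy maximizes expected total utility. -/
def Optimal (π : M.Policy) : Prop := ∀ π' : M.Policy, M.EU π' ≤ M.EU π

/-- A decision context: a joint value of the parents of the decision. -/
abbrev Ctx := ∀ w, M.edge w M.decision → M.dom w

/-- The decision context realized by the exogenous setting `ε` in `M_π`. -/
def ctx (π : M.Policy) (ε : M.Env) : M.Ctx := fun w _ => M.val π ε w

/-- Probability of a decision context in `M_π`. -/
def ctxProb (π : M.Policy) (pa : M.Ctx) : ℝ :=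
  ∑ ε : M.Env, if M.ctx π ε = pa then M.prob ε else 0

/-- Conditional expectation of `g` given the decision context `pa` in `M_π`. -/
def condExp (π : M.Policy) (pa : M.Ctx) (g : M.Env → ℝ) : ℝ :=
  (∑ ε : M.Env, if M.ctx π ε = pa then M.prob ε * g ε else 0) / M.ctxProb π pa

/-- The nested potential response `𝒰_{X_d}(ε)`: total utility when `X` is set to the
value it would take under `do(D = d)`, everything else following `M_π`. -/
def nestedU (π : M.Policy) (X : V) (d : M.dom M.decision) (ε : M.Env) : ℝ :=
  M.totUtil (M.valDo π (M.single X (M.valDo π (M.single M.decision d) ε X)) ε)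

/-- Control incentive on `X`: under every optimal policy, in some positive-probability
decision context some alternative decision `d` changes expected utility through `X`. -/
def ControlIncentive (X : V) : Prop :=
  ∀ π : M.Policy, M.Optimal π →
    ∃ pa : M.Ctx, 0 < M.ctxProb π pa ∧ ∃ d : M.dom M.decision,
      M.condExp π pa (M.nestedU π X d) ≠
        M.condExp π pa (fun ε => M.totUtil (M.val π ε))

/-- Response incentive on `X`: under every optimal policy some intervention on `X`
changes the decision for some exogenous setting. -/
def ResponseIncentive (X : V) : Prop :=
  ∀ π : M.Policy, M.Optimal π →
    ∃ (x : M.dom X) (ε : M.Env),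
      M.valDo π (M.single X x) ε M.decision ≠ M.val π ε M.decision

/-- Conditional probability of `event` given `cond` in `M_π`. -/
def cprob (π : M.Policy) (event cond : M.Env → Prop) : ℝ :=
  (∑ ε : M.Env, if cond ε ∧ event ε then M.prob ε else 0) /
    (∑ ε : M.Env, if cond ε then M.prob ε else 0)

/-- Counterfactual fairness of a policy `π` with respect to a protected attribute `A`:
conditional on any positive-probability decision context and value of `A`, intervening
on `A` does not change the distribution of the decision. -/
def CFair (π : M.Policy) (A : V) : Prop :=
  ∀ (d : M.dom M.decision) (pa : M.Ctx) (a a' : M.dom A),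
    (0 < ∑ ε : M.Env, if M.ctx π ε = pa ∧ M.val π ε A = a then M.prob ε else 0) →
      M.cprob π (fun ε => M.valDo π (M.single A a') ε M.decision = d)
          (fun ε => M.ctx π ε = pa ∧ M.val π ε A = a) =
        M.cprob π (fun ε => M.val π ε M.decision = d)
          (fun ε => M.ctx π ε = pa ∧ M.val π ε A = a)

/-- Expected value of the sum of utility variables in `S`. -/
def EUOn (S : Finset V) (π : M.Policy) : ℝ :=
  ∑ ε : M.Env, M.prob ε * ∑ v ∈ S, M.utilVal v (M.val π ε v)

/-- The policy obtained from `π` by replacing the observations of the decision-parents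
that are descendants of `X` by the fixed values `p`. -/
def modPolicy (π : M.Policy) (X : V) (p : M.Ctx) : M.Policy :=
  fun pa e =>
    π (fun w hw => if Relation.ReflTransGen M.edge X w then p w hw else pa w hw) e

end SCIM

/-- The graphical criterion for control incentives: a directed path `D ⇝ X ⇝ U`
for some utility node `U`. -/
def CICriterion {V : Type} (G : CID V) (X : V) : Prop :=
  Relation.ReflTransGen G.edge G.decision X ∧
    ∃ u ∈ G.utility, Relation.ReflTransGen G.edge X u

/-- The graphical criterion for response incentives: a directed path from `X` to some
parent `W` of the decision `D`, a directed path from `D` to some utility node `U`, and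
`W` d-connected to `U` given `({D} ∪ Pa_D) \ {W}`. -/
def RICriterion {V : Type} (G : CID V) (X : V) : Prop :=
  ∃ W, G.edge W G.decision ∧ ∃ u ∈ G.utility,
    Relation.ReflTransGen G.edge X W ∧
    Relation.ReflTransGen G.edge G.decision u ∧
    ¬ DSep G.edge {W} {u} (({G.decision} ∪ {w | G.edge w G.decision}) \ {W})

end

/-! ### Auxiliary construction for the completeness proof -/

noncomputable section ControlAux

open Relation

variable {V : Type} [Fintype V] [DecidableEq V]

private lemma chain_transGen {r : V → V → Prop} :
    ∀ {l : List V} {a : V}, List.Chain r a l → ∀ b ∈ l, Relation.TransGen r a b := by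
  intro l
  induction l with
  | nil => intro a _ b hb; simp at hb
  | cons c t ih =>
    intro a hc b hb
    rcases List.chain_cons.1 hc with ⟨hac, hct⟩
    rcases List.mem_cons.1 hb with rfl | hb
    · exact Relation.TransGen.single hac
    · exact (Relation.TransGen.single hac).trans (ih hct b hb)

private lemma nodup_of_chain' {r : V → V → Prop} (hac : ∀ v, ¬ Relation.TransGen r v v) :
    ∀ {l : List V}, l.Chain' r → l.Nodup := by
  intro l
  induction l with
  | nil => intro _; simp
  | cons a t ih =>
    intro hc
    have h1 : List.Chain r a t := hc
    exact List.nodup_cons.2 ⟨fun hmem => hac a (chain_transGen h1 a hmem), ih hc.tail⟩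

private lemma edge_of_chain' {r : V → V → Prop} {L : List V} (hC : L.Chain' r) {i : ℕ} {w v : V}
    (hi : L[i]? = some w) (hi1 : L[i+1]? = some v) : r w v := by
  obtain ⟨h1, rfl⟩ := List.getElem?_eq_some_iff.1 hi
  obtain ⟨h2, rfl⟩ := List.getElem?_eq_some_iff.1 hi1
  have := List.isChain_iff_getElem.1 hC i (by omega)
  simpa [List.get_eq_getElem] using this

private lemma transGen_of_chain' {r : V → V → Prop} {L : List V} {d : V}
    (hC : L.Chain' r) (hd : L[0]? = some d) :
    ∀ (j : ℕ) {v : V}, L[j+1]? = some v → Relation.TransGen r d v := by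
  intro j
  induction j with
  | zero => intro v h1; exact Relation.TransGen.single (edge_of_chain' hC hd h1)
  | succ j ih =>
    intro v h1
    have hlt : j + 1 + 1 < L.length := (List.getElem?_eq_some_iff.1 h1).1
    have hw : L[j+1]? = some (L[j+1]'(by omega)) := List.getElem?_eq_getElem (by omega)
    exact (ih hw).tail (edge_of_chain' hC hw h1)

/-- The structural function used for every non-decision node of the path model:
the OR of the parents that immediately precede `v` on the chosen path `L`. -/
private def pathF (G : CID V) (L : List V) (v : V)
    (pa : ∀ w, G.edge w v → Bool) : Bool :=
  if ∃ w, ∃ hw : G.edge w v, (∃ i : ℕ, L[i]? = some w ∧ L[i+1]? = some v) ∧ pa w hw = true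
  then true else false

/-- The SCIM that copies values along the path `L` and ignores everything else. -/
private noncomputable def pathSCIM (G : CID V) (L : List V) : SCIM V where
  toCID := G
  dom _ := Bool
  dom_fintype _ := inferInstance
  dom_nonempty _ := inferInstance
  edom _ := PUnit
  edom_fintype _ := inferInstance
  edom_nonempty _ := inferInstance
  utilVal _ b := if b then 1 else 0
  utilVal_inj _ _ a b hab := by cases a <;> cases b <;> simp_all
  f v _ pa _ := pathF G L v pa
  μ _ _ := 1
  μ_nonneg _ _ := zero_le_one
  μ_sum _ := by simp

private lemma SCIM.solve_eq (M : SCIM V) (mech : ∀ v, M.Mechanism v) (ε : M.Env) (v : V) :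
    M.solve mech ε v = mech v (fun w _ => M.solve mech ε w) (ε v) := by
  unfold SCIM.solve
  rw [WellFounded.fix_eq]

private lemma SCIM.polMech_decision (M : SCIM V) (π : M.Policy) :
    M.polMech π M.decision = π := by
  unfold SCIM.polMech
  refine (dif_pos rfl).trans ?_
  exact cast_eq _ π

private lemma SCIM.polMech_ne (M : SCIM V) (π : M.Policy) {v : V} (hv : v ≠ M.decision) :
    M.polMech π v = M.f v hv := by
  unfold SCIM.polMech
  exact dif_neg hv

private lemma SCIM.single_self (M : SCIM V) (X : V) (x : M.dom X) :
    M.single X x X = some x := by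
  unfold SCIM.single
  rw [dif_pos rfl]
  exact congrArg some (cast_eq _ x)

private lemma SCIM.single_ne (M : SCIM V) (X : V) (x : M.dom X) {v : V} (hv : v ≠ X) :
    M.single X x v = none := by
  unfold SCIM.single
  rw [dif_neg hv]

private lemma SCIM.doMech_self (M : SCIM V) (mech : ∀ v, M.Mechanism v) (X : V) (x : M.dom X) :
    M.doMech mech (M.single X x) X = fun _ _ => x := by
  unfold SCIM.doMech
  rw [M.single_self]

private lemma SCIM.doMech_ne (M : SCIM V) (mech : ∀ v, M.Mechanism v) (X : V) (x : M.dom X)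
    {v : V} (hv : v ≠ X) : M.doMech mech (M.single X x) v = mech v := by
  unfold SCIM.doMech
  rw [M.single_ne X x hv]

section PathLemmas

variable (G : CID V) (L : List V)

local notation "𝓜" => pathSCIM G L

private lemma solve_false (mech : ∀ v, (𝓜).Mechanism v) (ε : (𝓜).Env) (v : V)
    (hm : mech v = fun pa _ => pathF G L v pa)
    (hOPS : ∀ i : ℕ, L[i+1]? ≠ some v) :
    (𝓜).solve mech ε v = false := by
  rw [SCIM.solve_eq, hm]
  show pathF G L v _ = false
  unfold pathF
  rw [if_neg]
  rintro ⟨w, hw, ⟨i, -, hvi⟩, -⟩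
  exact hOPS i hvi

private lemma solve_copy (hC : L.Chain' G.edge) (hN : L.Nodup)
    (mech : ∀ v, (𝓜).Mechanism v) (ε : (𝓜).Env) {i : ℕ} {w v : V}
    (hi : L[i]? = some w) (hi1 : L[i+1]? = some v)
    (hm : mech v = fun pa _ => pathF G L v pa) :
    (𝓜).solve mech ε v = (𝓜).solve mech ε w := by
  rw [SCIM.solve_eq, hm]
  show pathF G L v (fun w' _ => (𝓜).solve mech ε w') = _
  unfold pathF
  by_cases hsw : (𝓜).solve mech ε w = true
  · rw [if_pos ⟨w, edge_of_chain' hC hi hi1, ⟨i, hi, hi1⟩, hsw⟩, hsw]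
  · have hw0 : (𝓜).solve mech ε w = false := by
      cases h' : (𝓜).solve mech ε w
      · rfl
      · exact absurd h' hsw
    rw [hw0, if_neg]
    rintro ⟨w', hw', ⟨j, hj, hj1⟩, hs⟩
    have hlt : i + 1 < L.length := (List.getElem?_eq_some_iff.1 hi1).1
    have hij : i + 1 = j + 1 := (List.getElem?_inj hlt hN).1 (hi1.trans hj1.symm)
    have hji : j = i := by omega
    subst hji
    have hww : w' = w := Option.some.inj (hj.symm.trans hi)
    have hs' : (𝓜).solve mech ε w = true := by rw [← hww]; exact hs
    rw [hw0] at hs'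
    cases hs'

private lemma pathSCIM_CI (X u : V) (hX : X ≠ G.decision) (huU : u ∈ G.utility)
    (hC : L.Chain' G.edge) (hN : L.Nodup) (hD0 : L[0]? = some G.decision)
    (hlast : L[L.length - 1]? = some u) (k : ℕ) (hk : L[k]? = some X) :
    (𝓜).ControlIncentive X := by
  -- restate the hypotheses in terms of the model's CID projections
  have hC' : L.Chain' (𝓜).edge := hC
  have hD0' : L[0]? = some (𝓜).decision := hD0
  have huU' : u ∈ (𝓜).utility := huU
  let ε₀ : (𝓜).Env := fun _ => PUnit.unit
  let pa₀ : (𝓜).Ctx := fun _ _ => false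
  -- basic structural facts
  have hDno : ∀ i : ℕ, L[i+1]? ≠ some (𝓜).decision := fun i hi =>
    (𝓜).acyclic _ (transGen_of_chain' hC' hD0' i hi)
  have hv_ne_D : ∀ {i : ℕ} {v : V}, L[i+1]? = some v → v ≠ (𝓜).decision := by
    intro i v h hv
    exact hDno i (hv ▸ h)
  have hOPSparent : ∀ w, (𝓜).edge w (𝓜).decision → ∀ i : ℕ, L[i+1]? ≠ some w :=
    fun w hw i hiw => (𝓜).acyclic _ ((transGen_of_chain' hC' hD0' i hiw).tail hw)
  have hwneD : ∀ w, (𝓜).edge w (𝓜).decision → w ≠ (𝓜).decision := by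
    intro w hw h
    exact (𝓜).acyclic _ (Relation.TransGen.single (h ▸ hw))
  have hOPSutil : ∀ v, v ∈ (𝓜).utility → v ≠ u → ∀ i : ℕ, L[i+1]? ≠ some v := by
    intro v hvU hvu i hiv
    have hlt : i + 1 < L.length := (List.getElem?_eq_some_iff.1 hiv).1
    by_cases hend : i + 1 = L.length - 1
    · rw [hend, hlast] at hiv
      exact hvu (Option.some.inj hiv).symm
    · have hlt2 : i + 1 + 1 < L.length := by omega
      have h2 : L[i+1+1]? = some (L[i+1+1]'hlt2) := List.getElem?_eq_getElem hlt2
      exact (𝓜).utility_no_children v hvU _ (edge_of_chain' hC' hiv h2)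
  -- mechanisms of the plain model `M_π`
  have hmP : ∀ (π' : (𝓜).Policy) (v : V) (hv : v ≠ (𝓜).decision),
      (𝓜).polMech π' v = fun pa _ => pathF G L v pa :=
    fun π' v hv => ((𝓜).polMech_ne π' hv).trans rfl
  have hparentsP : ∀ (π' : (𝓜).Policy) (w : V), (𝓜).edge w (𝓜).decision →
      (𝓜).solve ((𝓜).polMech π') ε₀ w = false :=
    fun π' w hw =>
      solve_false G L _ ε₀ w (hmP π' w (hwneD w hw)) (hOPSparent w hw)
  have hvalDP : ∀ π' : (𝓜).Policy,
      (𝓜).solve ((𝓜).polMech π') ε₀ (𝓜).decision = π' pa₀ (ε₀ (𝓜).decision) := by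
    intro π'
    rw [SCIM.solve_eq, SCIM.polMech_decision]
    have : (fun w (_ : (𝓜).edge w (𝓜).decision) => (𝓜).solve ((𝓜).polMech π') ε₀ w) = pa₀ :=
      funext fun w => funext fun hw => hparentsP π' w hw
    rw [this]
  have chainP : ∀ (π' : (𝓜).Policy) (i : ℕ) (v : V), L[i]? = some v →
      (𝓜).solve ((𝓜).polMech π') ε₀ v = (𝓜).solve ((𝓜).polMech π') ε₀ (𝓜).decision := by
    intro π' i
    induction i with
    | zero =>
      intro v hv
      rw [hD0'] at hv
      obtain rfl := Option.some.inj hv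
      rfl
    | succ i ih =>
      intro v hv
      have hlt : i + 1 < L.length := (List.getElem?_eq_some_iff.1 hv).1
      have hi : L[i]? = some (L[i]'(by omega)) := List.getElem?_eq_getElem (by omega)
      rw [solve_copy G L hC hN _ ε₀ hi hv (hmP π' v (hv_ne_D hv))]
      exact ih _ hi
  have huP : ∀ π' : (𝓜).Policy,
      (𝓜).solve ((𝓜).polMech π') ε₀ u = (𝓜).solve ((𝓜).polMech π') ε₀ (𝓜).decision :=
    fun π' => chainP π' _ u hlast
  have hutilP : ∀ (π' : (𝓜).Policy) (v : V), v ∈ (𝓜).utility → v ≠ u →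
      (𝓜).solve ((𝓜).polMech π') ε₀ v = false := by
    intro π' v hvU hvu
    have hvD : v ≠ (𝓜).decision := fun h => (𝓜).decision_not_utility (h ▸ hvU)
    exact solve_false G L _ ε₀ v (hmP π' v hvD) (hOPSutil v hvU hvu)
  -- total utility
  have htot : ∀ a : (∀ v, (𝓜).dom v), (∀ v ∈ (𝓜).utility, v ≠ u → a v = false) →
      (𝓜).totUtil a = (𝓜).utilVal u (a u) := by
    intro a ha
    unfold SCIM.totUtil
    exact Finset.sum_eq_single_of_mem u huU' (fun v hv hne => by rw [ha v hv hne]; rfl)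
  -- collapsing sums over the trivial exogenous variables
  have hsum : ∀ F : (𝓜).Env → ℝ, (∑ ε : (𝓜).Env, F ε) = F ε₀ :=
    fun F => Fintype.sum_eq_single ε₀ (fun x hx => absurd (funext fun v => rfl) hx)
  have hprob : ∀ ε : (𝓜).Env, (𝓜).prob ε = 1 := by
    intro ε
    unfold SCIM.prob
    exact Finset.prod_eq_one fun v _ => rfl
  have hctx : ∀ π' : (𝓜).Policy, (𝓜).ctx π' ε₀ = pa₀ := by
    intro π'
    funext w hw
    exact hparentsP π' w hw
  have hctxProb : ∀ π' : (𝓜).Policy, (𝓜).ctxProb π' pa₀ = 1 := by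
    intro π'
    unfold SCIM.ctxProb
    rw [hsum, if_pos (hctx π')]
    exact hprob ε₀
  have hcond : ∀ (π' : (𝓜).Policy) (g : (𝓜).Env → ℝ), (𝓜).condExp π' pa₀ g = g ε₀ := by
    intro π' g
    unfold SCIM.condExp
    rw [hsum, if_pos (hctx π'), hprob, hctxProb, one_mul, div_one]
  have hEU : ∀ π' : (𝓜).Policy,
      (𝓜).EU π' = (𝓜).utilVal u ((𝓜).solve ((𝓜).polMech π') ε₀ u) := by
    intro π'
    unfold SCIM.EU
    rw [hsum, hprob, one_mul]
    exact htot _ (fun v hv hne => hutilP π' v hv hne)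
  -- now take an optimal policy
  intro π hπ
  have hEUtrue : (𝓜).EU (fun _ _ => true) = 1 := by
    refine (hEU _).trans ((congrArg ((𝓜).utilVal u) ((huP _).trans (hvalDP _))).trans ?_)
    rfl
  have hDtrue : (𝓜).solve ((𝓜).polMech π) ε₀ (𝓜).decision = true := by
    by_contra hfalse
    have h0 : (𝓜).solve ((𝓜).polMech π) ε₀ (𝓜).decision = false := by
      cases h' : (𝓜).solve ((𝓜).polMech π) ε₀ (𝓜).decision
      · rfl
      · exact absurd h' hfalse
    have hEU0 : (𝓜).EU π = 0 := by rw [hEU, huP, h0]; rfl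
    have := hπ (fun _ _ => true)
    rw [hEU0, hEUtrue] at this
    linarith
  have huTrue : (𝓜).solve ((𝓜).polMech π) ε₀ u = true := by
    rw [huP π]
    exact hDtrue
  -- the model in which the decision is forced to `false`
  have hmD : ∀ (v : V) (hv : v ≠ (𝓜).decision),
      (𝓜).doMech ((𝓜).polMech π) ((𝓜).single (𝓜).decision false) v
        = fun pa _ => pathF G L v pa := by
    intro v hv
    exact ((𝓜).doMech_ne _ _ _ hv).trans (hmP π v hv)
  have hchainD : ∀ (i : ℕ) (v : V), L[i]? = some v →
      (𝓜).solve ((𝓜).doMech ((𝓜).polMech π) ((𝓜).single (𝓜).decision false)) ε₀ v = false := by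
    intro i
    induction i with
    | zero =>
      intro v hv
      rw [hD0'] at hv
      obtain rfl := Option.some.inj hv
      rw [SCIM.solve_eq]
      exact congrFun (congrFun ((𝓜).doMech_self _ _ _) _) _
    | succ i ih =>
      intro v hv
      have hlt : i + 1 < L.length := (List.getElem?_eq_some_iff.1 hv).1
      have hi : L[i]? = some (L[i]'(by omega)) := List.getElem?_eq_getElem (by omega)
      rw [solve_copy G L hC hN _ ε₀ hi hv (hmD v (hv_ne_D hv))]
      exact ih _ hi
  have hXzero :
      (𝓜).solve ((𝓜).doMech ((𝓜).polMech π) ((𝓜).single (𝓜).decision false)) ε₀ X = false :=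
    hchainD k X hk
  -- the model in which `X` is forced to `false`
  have hmX : ∀ (v : V), v ≠ X → v ≠ (𝓜).decision →
      (𝓜).doMech ((𝓜).polMech π) ((𝓜).single X false) v = fun pa _ => pathF G L v pa := by
    intro v hvX hvD
    exact ((𝓜).doMech_ne _ _ _ hvX).trans (hmP π v hvD)
  have hXf : (𝓜).solve ((𝓜).doMech ((𝓜).polMech π) ((𝓜).single X false)) ε₀ X = false := by
    rw [SCIM.solve_eq]
    exact congrFun (congrFun ((𝓜).doMech_self _ _ _) _) _
  have hklt : k < L.length := (List.getElem?_eq_some_iff.1 hk).1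
  have hafter : ∀ (m : ℕ) (v : V), L[k+m]? = some v →
      (𝓜).solve ((𝓜).doMech ((𝓜).polMech π) ((𝓜).single X false)) ε₀ v = false := by
    intro m
    induction m with
    | zero =>
      intro v hv
      rw [Nat.add_zero, hk] at hv
      obtain rfl := Option.some.inj hv
      exact hXf
    | succ m ih =>
      intro v hv
      have hv' : L[(k+m)+1]? = some v := hv
      have hvD : v ≠ (𝓜).decision := hv_ne_D hv'
      have hvX : v ≠ X := by
        intro hEq
        subst hEq
        have hlt : k + m + 1 < L.length := (List.getElem?_eq_some_iff.1 hv').1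
        have := (List.getElem?_inj hlt hN).1 (hv'.trans hk.symm)
        omega
      have hi : L[k+m]? = some (L[k+m]'(by
          have := (List.getElem?_eq_some_iff.1 hv').1; omega)) :=
        List.getElem?_eq_getElem (by have := (List.getElem?_eq_some_iff.1 hv').1; omega)
      rw [solve_copy G L hC hN _ ε₀ hi hv' (hmX v hvX hvD)]
      exact ih _ hi
  have huX : (𝓜).solve ((𝓜).doMech ((𝓜).polMech π) ((𝓜).single X false)) ε₀ u = false := by
    have hidx : L[k + (L.length - 1 - k)]? = some u := by
      rw [show k + (L.length - 1 - k) = L.length - 1 from by omega]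
      exact hlast
    exact hafter _ u hidx
  have hutilX : ∀ v ∈ (𝓜).utility, v ≠ u →
      (𝓜).solve ((𝓜).doMech ((𝓜).polMech π) ((𝓜).single X false)) ε₀ v = false := by
    intro v hvU hvu
    by_cases hvX : v = X
    · subst hvX; exact hXf
    · have hvD : v ≠ (𝓜).decision := fun h => (𝓜).decision_not_utility (h ▸ hvU)
      exact solve_false G L _ ε₀ v (hmX v hvX hvD) (hOPSutil v hvU hvu)
  -- assemble the control incentive witness
  refine ⟨pa₀, ?_, false, ?_⟩
  · rw [hctxProb]
    norm_num
  · rw [hcond, hcond]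
    show (𝓜).nestedU π X false ε₀ ≠ (𝓜).totUtil ((𝓜).val π ε₀)
    unfold SCIM.nestedU
    rw [show (𝓜).valDo π ((𝓜).single (𝓜).decision false) ε₀ X = false from hXzero]
    rw [htot ((𝓜).valDo π ((𝓜).single X false) ε₀) (fun v hv hne => hutilX v hv hne),
      htot ((𝓜).val π ε₀) (fun v hv hne => hutilP π v hv hne)]
    rw [show (𝓜).valDo π ((𝓜).single X false) ε₀ u = false from huX,
      show (𝓜).val π ε₀ u = true from huTrue]
    show (0:ℝ) ≠ 1
    norm_num

end PathLemmas

end ControlAux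


/-- **Control incentive graphical criterion: completeness.**
If a single-decision CID `G` has a directed path `D ⇝ X ⇝ U` to some utility node `U`,
then some SCIM compatible with `G` has a control incentive on `X ≠ D`. -/
theorem control_incentive_criterion_completeness
    {V : Type} [Fintype V] [DecidableEq V] (G : CID V) (X : V) (hX : X ≠ G.decision)
    (h : CICriterion G X) :
    ∃ M : SCIM V, M.toCID = G ∧ M.ControlIncentive X := by
  obtain ⟨hDX, u, huU, hXu⟩ := h
  obtain ⟨l₁, hl₁c, hl₁last⟩ := List.exists_isChain_cons_of_relationReflTransGen hDX
  obtain ⟨l₂, hl₂c, hl₂last⟩ := List.exists_isChain_cons_of_relationReflTransGen hXu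
  set L : List V := (G.decision :: l₁) ++ l₂ with hL
  have hC1 : (G.decision :: l₁).Chain' G.edge := hl₁c
  have hC2 : (X :: l₂).Chain' G.edge := hl₂c
  have hC : L.Chain' G.edge := by
    refine List.IsChain.append hC1 hC2.tail ?_
    intro x hx y hy
    rw [List.getLast?_eq_getLast_of_ne_nil (List.cons_ne_nil _ _)] at hx
    have hxX : x = X := by
      have := Option.some.inj hx
      rw [← this, hl₁last]
    subst hxX
    cases l₂ with
    | nil => simp at hy
    | cons c t =>
      have : c = y := by simpa using hy
      subst this
      exact (List.chain_cons.1 hl₂c).1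
  have hN : L.Nodup := nodup_of_chain' G.acyclic hC
  have hD0 : L[0]? = some G.decision := by simp [hL]
  have hglast : L.getLast? = some u := by
    cases l₂ with
    | nil =>
      have hXu' : X = u := by simpa using hl₂last
      rw [hL, List.append_nil, List.getLast?_eq_getLast_of_ne_nil (List.cons_ne_nil _ _)]
      rw [hl₁last, hXu']
    | cons c t =>
      rw [hL, List.getLast?_append_of_ne_nil _ (List.cons_ne_nil _ _),
        List.getLast?_eq_getLast_of_ne_nil (List.cons_ne_nil _ _)]
      rw [← List.getLast_cons_cons (a := X) (b := c) (l := t)]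
      rw [hl₂last]
  have hlastIdx : L[L.length - 1]? = some u := by
    rw [← List.getLast?_eq_getElem?]
    exact hglast
  have hXL : X ∈ L := by
    have : X ∈ G.decision :: l₁ := hl₁last ▸ List.getLast_mem (List.cons_ne_nil _ _)
    exact List.mem_append_left _ this
  obtain ⟨k, hk⟩ := List.getElem?_of_mem hXL
  exact ⟨pathSCIM G L, rfl, pathSCIM_CI G L X u hX huU hC hN hD0 hlastIdx k hk⟩
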